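/- arXiv:2503.06440 — 3 statements merged into one kernel-verified Lean document; each statement's English description precedes it below -/
import Mathlib

section
/- Taylor remainder formula for the discrete difference operator: if f : ℝ → ℝ is n+2 times continuously differentiable, then D_h^n f = f^{(n)} + R_{D_h^n}(f), where R_{D_h^n}(f)(x) = h² Σ_{k=0}^{n} C(n,k)(-1)^k ((n-2k)/2)^{n+2} ∫_0^1 ((1-σ)^{n+1}/(n+1)!) f^{(n+2)}(x + ((n-2k)h/2)σ) dσ. In particular, |D_h^n f(x) - f^{(n)}(x)| ≤ C h² sup|f^{(n+2)}| with C depending only on n. -/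
open Finset intervalIntegral

/-- Iterated centered difference `D_h^n f (x) = h^{-n} Σ_{k=0}^n C(n,k) (-1)^k f(x + (n-2k)h/2)`. -/
noncomputable def DhIter (h : ℝ) (n : ℕ) (f : ℝ → ℝ) : ℝ → ℝ := fun x =>
  (1 / h ^ n) * ∑ k ∈ Finset.range (n + 1),
    (n.choose k : ℝ) * (-1) ^ k * f (x + ((n : ℝ) - 2 * k) * h / 2)

/-- Alternating binomial power sum `Σ_{k=0}^n (-1)^k C(n,k) k^j`. -/
noncomputable def Salt (n j : ℕ) : ℝ :=
  ∑ k ∈ Finset.range (n + 1), (-1 : ℝ) ^ k * (n.choose k : ℝ) * (k : ℝ) ^ j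

lemma Salt_rec (n j : ℕ) :
    Salt (n + 1) j = - ∑ i ∈ Finset.range j, (j.choose i : ℝ) * Salt n i := by
  set f : ℕ → ℝ := fun k => (-1 : ℝ) ^ k * (n.choose k : ℝ) * (k : ℝ) ^ j with hf
  have h2 : (∑ k ∈ Finset.range (n + 1), f (k+1)) + f 0 = Salt n j := by
    rw [← Finset.sum_range_succ' f (n+1), Finset.sum_range_succ]
    simp [hf, Salt, Nat.choose_succ_self]
  have hA : (∑ k ∈ Finset.range (n + 1),
        (-1 : ℝ) ^ (k+1) * (n.choose k : ℝ) * ((k : ℝ) + 1) ^ j)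
      = - ∑ i ∈ Finset.range j, (j.choose i : ℝ) * Salt n i - Salt n j := by
    have expand : ∀ k : ℕ, ((k : ℝ) + 1) ^ j
        = ∑ i ∈ Finset.range (j+1), (k : ℝ) ^ i * (j.choose i : ℝ) := by
      intro k
      rw [add_pow]
      exact Finset.sum_congr rfl (fun i _ => by ring)
    calc (∑ k ∈ Finset.range (n + 1),
          (-1 : ℝ) ^ (k+1) * (n.choose k : ℝ) * ((k : ℝ) + 1) ^ j)
        = ∑ k ∈ Finset.range (n + 1), ∑ i ∈ Finset.range (j+1),
            -((j.choose i : ℝ) * ((-1 : ℝ) ^ k * (n.choose k : ℝ) * (k : ℝ) ^ i)) := by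
          refine Finset.sum_congr rfl (fun k _ => ?_)
          rw [expand k, Finset.mul_sum]
          exact Finset.sum_congr rfl (fun i _ => by ring)
      _ = - ∑ i ∈ Finset.range (j+1), (j.choose i : ℝ) * Salt n i := by
          rw [Finset.sum_comm, ← Finset.sum_neg_distrib]
          refine Finset.sum_congr rfl (fun i _ => ?_)
          rw [Salt, Finset.mul_sum, ← Finset.sum_neg_distrib]
      _ = - ∑ i ∈ Finset.range j, (j.choose i : ℝ) * Salt n i - Salt n j := by
          rw [Finset.sum_range_succ, Nat.choose_self]
          push_cast; ring
  have h1 : Salt (n + 1) j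
      = (∑ k ∈ Finset.range (n + 1),
          (-1 : ℝ) ^ (k+1) * (n.choose k : ℝ) * ((k : ℝ) + 1) ^ j)
        + ((∑ k ∈ Finset.range (n + 1), f (k+1)) + f 0) := by
    rw [Salt, Finset.sum_range_succ']
    have : ∀ k ∈ Finset.range (n+1),
        (-1 : ℝ) ^ (k+1) * (((n+1).choose (k+1) : ℝ)) * ((k+1 : ℕ) : ℝ) ^ j
        = (-1 : ℝ) ^ (k+1) * (n.choose k : ℝ) * ((k : ℝ) + 1) ^ j + f (k+1) := by
      intro k _
      rw [Nat.choose_succ_succ, hf]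
      push_cast
      ring
    rw [Finset.sum_congr rfl this, Finset.sum_add_distrib]
    simp only [hf, Nat.choose_zero_right, Nat.cast_one]
    push_cast
    ring
  rw [h1, h2, hA]
  ring

lemma Salt_eq_zero {n j : ℕ} (h : j < n) : Salt n j = 0 := by
  induction n generalizing j with
  | zero => omega
  | succ n ih =>
    rw [Salt_rec]
    rw [Finset.sum_eq_zero, neg_zero]
    intro i hi
    rw [ih (by simp at hi; omega), mul_zero]

lemma Salt_self (n : ℕ) : Salt n n = (-1 : ℝ) ^ n * (n.factorial : ℝ) := by
  induction n with
  | zero => simp [Salt]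
  | succ n ih =>
    rw [Salt_rec, Finset.sum_range_succ, Finset.sum_eq_zero
      (fun i hi => by rw [Salt_eq_zero (by simp at hi; omega), mul_zero]), zero_add,
      ih, Nat.choose_succ_self_right, Nat.factorial_succ]
    push_cast
    ring

/-- Centered alternating binomial power sum `Σ_{k=0}^n C(n,k)(-1)^k (n-2k)^j`. -/
noncomputable def Talt (n j : ℕ) : ℝ :=
  ∑ k ∈ Finset.range (n + 1), (n.choose k : ℝ) * (-1 : ℝ) ^ k * ((n : ℝ) - 2 * k) ^ j

lemma Talt_expand (n j : ℕ) :
    Talt n j = ∑ i ∈ Finset.range (j + 1),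
      (-2 : ℝ) ^ i * (n : ℝ) ^ (j - i) * (j.choose i : ℝ) * Salt n i := by
  rw [Talt]
  have : ∀ k ∈ Finset.range (n+1), (n.choose k : ℝ) * (-1 : ℝ) ^ k * ((n : ℝ) - 2 * k) ^ j
      = ∑ i ∈ Finset.range (j + 1),
          (-2 : ℝ) ^ i * (n : ℝ) ^ (j - i) * (j.choose i : ℝ)
            * ((-1 : ℝ) ^ k * (n.choose k : ℝ) * (k : ℝ) ^ i) := by
    intro k _
    have : ((n : ℝ) - 2 * k) ^ j = ((-2 : ℝ) * k + (n : ℝ)) ^ j := by ring_nf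
    rw [this, add_pow, Finset.mul_sum]
    exact Finset.sum_congr rfl (fun i _ => by rw [mul_pow]; ring)
  rw [Finset.sum_congr rfl this, Finset.sum_comm]
  exact Finset.sum_congr rfl (fun i _ => by rw [Salt, Finset.mul_sum])

lemma Talt_eq_zero {n j : ℕ} (h : j < n) : Talt n j = 0 := by
  rw [Talt_expand, Finset.sum_eq_zero]
  intro i hi
  rw [Salt_eq_zero (by simp at hi; omega), mul_zero]

lemma Talt_self (n : ℕ) : Talt n n = (2 : ℝ) ^ n * (n.factorial : ℝ) := by
  rw [Talt_expand, Finset.sum_range_succ, Finset.sum_eq_zero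
    (fun i hi => by rw [Salt_eq_zero (by simp at hi; omega), mul_zero]), zero_add,
    Salt_self, Nat.choose_self, Nat.sub_self]
  have : ((-2 : ℝ)) ^ n = (-1 : ℝ) ^ n * 2 ^ n := by
    rw [← neg_one_mul, mul_pow]
  rw [this]
  have h2 : (-1 : ℝ) ^ n * (-1 : ℝ) ^ n = 1 := by
    rw [← pow_add]; exact Even.neg_one_pow ⟨n, rfl⟩
  push_cast
  linear_combination (2:ℝ)^n * (n.factorial : ℝ) * h2

set_option linter.constructorNameAsVariable false in
lemma Talt_succ (n : ℕ) : Talt n (n + 1) = 0 := by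
  set f : ℕ → ℝ := fun k => (n.choose k : ℝ) * (-1 : ℝ) ^ k * ((n : ℝ) - 2 * k) ^ (n+1) with hf
  have key : ∀ k ∈ Finset.range (n+1), f (n - k) = - f k := by
    intro k hk
    simp only [Finset.mem_range] at hk
    have hkn : k ≤ n := by omega
    have h2 : (-1 : ℝ) ^ (n - k) * (-1 : ℝ) ^ k = (-1 : ℝ) ^ n := by
      rw [← pow_add]; congr 1; omega
    have hkk : (-1 : ℝ) ^ k * (-1 : ℝ) ^ k = 1 := by
      rw [← pow_add]; exact Even.neg_one_pow ⟨k, rfl⟩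
    have hnn : (-1 : ℝ) ^ n * (-1 : ℝ) ^ n = 1 := by
      rw [← pow_add]; exact Even.neg_one_pow ⟨n, rfl⟩
    have hcast : ((n - k : ℕ) : ℝ) = (n : ℝ) - (k : ℝ) := by
      push_cast [Nat.cast_sub hkn]; ring
    have hneg : ((n : ℝ) - 2 * ((n - k : ℕ) : ℝ)) ^ (n+1)
        = (-1 : ℝ) ^ (n+1) * ((n : ℝ) - 2 * k) ^ (n+1) := by
      rw [hcast]
      have : ((n : ℝ) - 2 * ((n:ℝ) - k)) = -(( n : ℝ) - 2 * k) := by ring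
      rw [this, neg_pow]
    rw [hf]
    simp only
    rw [Nat.choose_symm hkn, hneg]
    have ha : (-1 : ℝ) ^ (n - k) = (-1 : ℝ) ^ n * (-1 : ℝ) ^ k := by
      linear_combination ((-1:ℝ)^k) * h2 - ((-1:ℝ)^(n-k)) * hkk
    have hsign : (-1 : ℝ) ^ (n - k) * (-1 : ℝ) ^ (n+1) = - (-1 : ℝ) ^ k := by
      rw [pow_succ, ha]
      linear_combination (-(-1:ℝ)^k) * hnn
    linear_combination ((n.choose k : ℝ) * ((n : ℝ) - 2 * k) ^ (n+1)) * hsign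
  have refl : ∑ k ∈ Finset.range (n+1), f (n - k) = ∑ k ∈ Finset.range (n+1), f k := by
    have := Finset.sum_range_reflect f (n+1)
    simpa using this
  have hT : Talt n (n+1) = ∑ k ∈ Finset.range (n+1), f k := rfl
  have h0 : Talt n (n+1) = - Talt n (n+1) := by
    calc Talt n (n+1) = ∑ k ∈ Finset.range (n+1), f (n-k) := by rw [hT, refl]
      _ = ∑ k ∈ Finset.range (n+1), -f k := Finset.sum_congr rfl key
      _ = - Talt n (n+1) := by rw [Finset.sum_neg_distrib, hT]
  linarith

/-- Taylor's formula with integral remainder for a globally `C^{n+2}` function. -/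
lemma taylor_int (n : ℕ) {f : ℝ → ℝ} (hf : ContDiff ℝ ((n : ℕ∞) + 2) f) (x t : ℝ) :
    f (x + t) = (∑ j ∈ Finset.range (n + 2),
        t ^ j / (j.factorial : ℝ) * iteratedDeriv j f x)
      + t ^ (n + 2) * ∫ σ in (0:ℝ)..1,
          (1 - σ) ^ (n + 1) / ((n + 1).factorial : ℝ) * iteratedDeriv (n + 2) f (x + t * σ) := by
  set z := x + t with hz
  set F := iteratedDeriv (n + 2) f with hF
  have hFc : Continuous F := hf.continuous_iteratedDeriv (n+2) (by exact_mod_cast le_refl _)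
  have hderiv : ∀ y : ℝ, HasDerivAt (fun y => taylorWithinEval f (n+1) Set.univ y z)
      ((((n+1).factorial : ℝ)⁻¹ * (z - y) ^ (n+1)) * F y) y := by
    intro y
    have h1 : ContDiffOn ℝ (n+1 : ℕ) f Set.univ :=
      (hf.of_le (by norm_cast; exact_mod_cast Nat.le_succ (n+1))).contDiffOn
    have h2 : DifferentiableWithinAt ℝ (iteratedDerivWithin (n+1) f Set.univ) Set.univ y := by
      rw [iteratedDerivWithin_univ]
      exact ((hf.differentiable_iteratedDeriv (n+1)
        (by norm_cast; exact_mod_cast Nat.lt_succ_self (n+1))).differentiableAt).differentiableWithinAt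
    have := hasDerivWithinAt_taylorWithinEval (f := f) (x := z) (y := y) (n := n+1)
      (s := Set.univ) (s' := Set.univ)
      uniqueDiffOn_univ Filter.univ_mem (Set.mem_univ y)
      subset_rfl h1 h2
    rw [hasDerivWithinAt_univ] at this
    have e : iteratedDerivWithin (n+1+1) f Set.univ y = F y := by
      rw [iteratedDerivWithin_univ, hF]
    rw [e] at this
    simpa [smul_eq_mul] using this
  have hint : IntervalIntegrable
      (fun y => (((n+1).factorial : ℝ)⁻¹ * (z - y) ^ (n+1)) * F y) MeasureTheory.volume x z := by
    exact (Continuous.mul (by continuity) hFc).intervalIntegrable _ _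
  have ftc := intervalIntegral.integral_eq_sub_of_hasDerivAt
      (f := fun y => taylorWithinEval f (n+1) Set.univ y z)
      (f' := fun y => (((n+1).factorial : ℝ)⁻¹ * (z - y) ^ (n+1)) * F y)
      (fun y _ => hderiv y) hint
  simp only [taylorWithinEval_self] at ftc
  have hpoly : taylorWithinEval f (n+1) Set.univ x z
      = ∑ j ∈ Finset.range (n + 2), t ^ j / (j.factorial : ℝ) * iteratedDeriv j f x := by
    rw [taylor_within_apply]
    refine Finset.sum_congr rfl (fun j _ => ?_)
    rw [iteratedDerivWithin_univ, smul_eq_mul, hz]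
    ring_nf
  have hsub : (∫ y in x..z, (((n+1).factorial : ℝ)⁻¹ * (z - y) ^ (n+1)) * F y)
      = t ^ (n+2) * ∫ σ in (0:ℝ)..1,
          (1 - σ) ^ (n + 1) / ((n + 1).factorial : ℝ) * F (x + t * σ) := by
    have hcv := intervalIntegral.integral_comp_smul_deriv (a := (0:ℝ)) (b := 1)
      (f := fun σ => x + t * σ) (f' := fun _ => t)
      (g := fun y => (((n+1).factorial : ℝ)⁻¹ * (z - y) ^ (n+1)) * F y)
      (fun σ _ => by
        simpa using ((hasDerivAt_id σ).const_mul t).const_add x)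
      continuousOn_const
      (Continuous.mul (by continuity) hFc)
    simp only [mul_zero, add_zero, mul_one, smul_eq_mul] at hcv
    rw [← hz] at hcv
    rw [← hcv]
    rw [← intervalIntegral.integral_const_mul]
    refine intervalIntegral.integral_congr (fun σ _ => ?_)
    simp only [Function.comp]
    have : z - (x + t * σ) = t * (1 - σ) := by rw [hz]; ring
    rw [this, mul_pow]
    field_simp
    ring
  rw [hpoly, hsub] at ftc
  rw [hz] at ftc ⊢
  linarith

/-- Taylor remainder formula for the iterated centered difference: if `f` is `C^{n+2}` then
`D_h^n f = f^{(n)} + R_{D_h^n}(f)` with the explicit integral remainder, and in particular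
`|D_h^n f(x) - f^{(n)}(x)| ≤ C h² sup |f^{(n+2)}|` with `C` depending only on `n`. -/
theorem DhIter_taylor (n : ℕ) :
    ∃ C > 0, ∀ (h : ℝ), 0 < h → ∀ (f : ℝ → ℝ), ContDiff ℝ (n + 2) f → ∀ x : ℝ,
      (DhIter h n f x
          = iteratedDeriv n f x
            + h ^ 2 * ∑ k ∈ Finset.range (n + 1),
                (n.choose k : ℝ) * (-1) ^ k * (((n : ℝ) - 2 * k) / 2) ^ (n + 2)
                  * ∫ σ in (0:ℝ)..1,
                      (1 - σ) ^ (n + 1) / ((n + 1).factorial : ℝ)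
                        * iteratedDeriv (n + 2) f (x + ((n : ℝ) - 2 * k) * h / 2 * σ)) ∧
        ∀ M : ℝ, (∀ y : ℝ, |iteratedDeriv (n + 2) f y| ≤ M) →
          |DhIter h n f x - iteratedDeriv n f x| ≤ C * h ^ 2 * M := by
  refine ⟨2 ^ n * ((n : ℝ) + 1) ^ (n + 2) + 1, by positivity, ?_⟩
  intro h hh f hf x
  have hf2 : ContDiff ℝ ((n : ℕ∞) + 2) f := by exact_mod_cast hf
  set D : ℕ → ℝ := fun j => iteratedDeriv j f x with hD
  set I : ℕ → ℝ := fun k => ∫ σ in (0:ℝ)..1,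
      (1 - σ) ^ (n + 1) / ((n + 1).factorial : ℝ)
        * iteratedDeriv (n + 2) f (x + ((n : ℝ) - 2 * (k : ℝ)) * h / 2 * σ) with hI
  have hA : ∑ k ∈ Finset.range (n+1), (n.choose k : ℝ) * (-1 : ℝ) ^ k
        * (∑ j ∈ Finset.range (n+2),
            (((n : ℝ) - 2 * k) * h / 2) ^ j / (j.factorial : ℝ) * D j)
      = D n * h ^ n := by
    calc ∑ k ∈ Finset.range (n+1), (n.choose k : ℝ) * (-1 : ℝ) ^ k
          * (∑ j ∈ Finset.range (n+2),
              (((n : ℝ) - 2 * k) * h / 2) ^ j / (j.factorial : ℝ) * D j)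
        = ∑ k ∈ Finset.range (n+1), ∑ j ∈ Finset.range (n+2),
            (D j / (j.factorial : ℝ) * (h/2) ^ j)
              * ((n.choose k : ℝ) * (-1 : ℝ) ^ k * ((n : ℝ) - 2 * k) ^ j) := by
          refine Finset.sum_congr rfl (fun k _ => ?_)
          rw [Finset.mul_sum]
          refine Finset.sum_congr rfl (fun j _ => ?_)
          rw [show ((n : ℝ) - 2 * k) * h / 2 = ((n : ℝ) - 2 * k) * (h/2) by ring, mul_pow]
          ring
      _ = ∑ j ∈ Finset.range (n+2), (D j / (j.factorial : ℝ) * (h/2) ^ j) * Talt n j := by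
          rw [Finset.sum_comm]
          exact Finset.sum_congr rfl (fun j _ => by rw [Talt, Finset.mul_sum])
      _ = D n * h ^ n := by
          rw [Finset.sum_range_succ, Finset.sum_range_succ, Talt_succ, Talt_self,
            Finset.sum_eq_zero
              (fun j hj => by rw [Talt_eq_zero (Finset.mem_range.mp hj), mul_zero])]
          have h2n : (h/2) ^ n * 2 ^ n = h ^ n := by
            rw [← mul_pow]; norm_num
          have hfac : (n.factorial : ℝ) ≠ 0 := by
            exact_mod_cast n.factorial_ne_zero
          rw [zero_add, mul_zero, add_zero]
          field_simp [hfac]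
          rw [mul_assoc, h2n]
  have hmain : DhIter h n f x = D n
      + h ^ 2 * ∑ k ∈ Finset.range (n + 1),
          (n.choose k : ℝ) * (-1) ^ k * (((n : ℝ) - 2 * k) / 2) ^ (n + 2) * I k := by
    have hexp : ∀ k ∈ Finset.range (n+1),
        (n.choose k : ℝ) * (-1 : ℝ) ^ k * f (x + ((n : ℝ) - 2 * k) * h / 2)
        = (n.choose k : ℝ) * (-1 : ℝ) ^ k
            * (∑ j ∈ Finset.range (n+2),
                (((n : ℝ) - 2 * k) * h / 2) ^ j / (j.factorial : ℝ) * D j)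
          + (n.choose k : ℝ) * (-1 : ℝ) ^ k * (((n : ℝ) - 2 * k) * h / 2) ^ (n+2) * I k := by
      intro k _
      rw [taylor_int n hf2 x (((n : ℝ) - 2 * k) * h / 2)]
      rw [hI, hD]
      ring
    rw [DhIter]
    rw [Finset.sum_congr rfl hexp, Finset.sum_add_distrib, mul_add, hA]
    have hh0 : h ^ n ≠ 0 := by positivity
    congr 1
    · field_simp
    · rw [Finset.mul_sum, Finset.mul_sum]
      refine Finset.sum_congr rfl (fun k _ => ?_)
      have ht : ((n : ℝ) - 2 * k) * h / 2 = (((n : ℝ) - 2 * k) / 2) * h := by ring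
      rw [ht, mul_pow, pow_add]
      field_simp
      ring
  constructor
  · exact hmain
  · intro M hM
    have hM0 : 0 ≤ M := le_trans (abs_nonneg _) (hM 0)
    have hIb : ∀ k : ℕ, |I k| ≤ M := by
      intro k
      have hb : ∀ σ ∈ Set.uIoc (0:ℝ) 1,
          ‖(1 - σ) ^ (n + 1) / (((n + 1).factorial : ℕ) : ℝ)
            * iteratedDeriv (n + 2) f (x + ((n : ℝ) - 2 * (k:ℝ)) * h / 2 * σ)‖ ≤ M := by
        intro σ hσ
        rw [Set.uIoc_of_le (by norm_num : (0:ℝ) ≤ 1)] at hσ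
        obtain ⟨h0, h1⟩ := hσ
        have hfac1 : (1:ℝ) ≤ (((n + 1).factorial : ℕ) : ℝ) := by
          exact_mod_cast Nat.one_le_iff_ne_zero.mpr (n+1).factorial_ne_zero
        have e1 : |(1 - σ) ^ (n + 1) / (((n + 1).factorial : ℕ) : ℝ)| ≤ 1 := by
          rw [abs_div, abs_pow]
          have hs : |1 - σ| ≤ 1 := by rw [abs_le]; constructor <;> linarith
          have hp : |1 - σ| ^ (n+1) ≤ 1 := pow_le_one₀ (abs_nonneg _) hs
          rw [abs_of_pos (by positivity : (0:ℝ) < (((n + 1).factorial : ℕ) : ℝ)),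
            div_le_one (by positivity)]
          exact hp.trans hfac1
        rw [Real.norm_eq_abs, abs_mul]
        calc |(1 - σ) ^ (n + 1) / (((n + 1).factorial : ℕ) : ℝ)|
              * |iteratedDeriv (n + 2) f (x + ((n : ℝ) - 2 * (k:ℝ)) * h / 2 * σ)|
            ≤ 1 * M := mul_le_mul e1 (hM _) (abs_nonneg _) one_pos.le
          _ = M := one_mul M
      have key := intervalIntegral.norm_integral_le_of_norm_le_const hb
      rw [hI]
      simp only [Real.norm_eq_abs] at key ⊢
      calc |∫ σ in (0:ℝ)..1, (1 - σ) ^ (n + 1) / (((n + 1).factorial : ℕ) : ℝ)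
              * iteratedDeriv (n + 2) f (x + ((n : ℝ) - 2 * (k:ℝ)) * h / 2 * σ)|
          ≤ M * |(1:ℝ) - 0| := key
        _ = M := by norm_num
    rw [hmain]
    have hS : |∑ k ∈ Finset.range (n + 1),
          (n.choose k : ℝ) * (-1) ^ k * (((n : ℝ) - 2 * k) / 2) ^ (n + 2) * I k|
        ≤ 2 ^ n * (((n : ℝ) + 1) ^ (n + 2) * M) := by
      calc |∑ k ∈ Finset.range (n + 1),
            (n.choose k : ℝ) * (-1) ^ k * (((n : ℝ) - 2 * k) / 2) ^ (n + 2) * I k|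
          ≤ ∑ k ∈ Finset.range (n + 1),
            |(n.choose k : ℝ) * (-1) ^ k * (((n : ℝ) - 2 * k) / 2) ^ (n + 2) * I k| :=
            Finset.abs_sum_le_sum_abs _ _
        _ ≤ ∑ k ∈ Finset.range (n + 1),
            (n.choose k : ℝ) * (((n : ℝ) + 1) ^ (n + 2) * M) := by
            refine Finset.sum_le_sum (fun k hk => ?_)
            have hk' : (k:ℝ) ≤ n := by
              exact_mod_cast Nat.lt_succ_iff.mp (Finset.mem_range.mp hk)
            have h0k : (0:ℝ) ≤ k := Nat.cast_nonneg k
            have h0n : (0:ℝ) ≤ n := Nat.cast_nonneg n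
            have hq : |((n:ℝ) - 2*k)/2| ≤ (n:ℝ)+1 := by
              rw [abs_le]; constructor <;> [linarith; linarith]
            have e2 : |(((n : ℝ) - 2 * k) / 2) ^ (n + 2)| * |I k|
                ≤ ((n : ℝ) + 1) ^ (n + 2) * M := by
              rw [abs_pow]
              exact mul_le_mul (pow_le_pow_left₀ (abs_nonneg _) hq _) (hIb k)
                (abs_nonneg _) (by positivity)
            calc |(n.choose k : ℝ) * (-1) ^ k * (((n : ℝ) - 2 * k) / 2) ^ (n + 2) * I k|
                = (n.choose k : ℝ)
                    * (|(((n : ℝ) - 2 * k) / 2) ^ (n + 2)| * |I k|) := by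
                  rw [abs_mul, abs_mul, abs_mul, abs_pow, abs_neg, abs_one, one_pow, mul_one,
                    abs_of_nonneg (Nat.cast_nonneg _), mul_assoc]
              _ ≤ (n.choose k : ℝ) * (((n : ℝ) + 1) ^ (n + 2) * M) :=
                  mul_le_mul_of_nonneg_left e2 (Nat.cast_nonneg _)
        _ = 2 ^ n * (((n : ℝ) + 1) ^ (n + 2) * M) := by
            rw [← Finset.sum_mul]
            have : ∑ k ∈ Finset.range (n+1), (n.choose k : ℝ) = 2 ^ n := by
              rw [← Nat.cast_sum, Nat.sum_range_choose]; push_cast; ring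
            rw [this]
    have habs : |D n + h ^ 2 * (∑ k ∈ Finset.range (n + 1),
          (n.choose k : ℝ) * (-1) ^ k * (((n : ℝ) - 2 * k) / 2) ^ (n + 2) * I k) - D n|
        = h ^ 2 * |∑ k ∈ Finset.range (n + 1),
          (n.choose k : ℝ) * (-1) ^ k * (((n : ℝ) - 2 * k) / 2) ^ (n + 2) * I k| := by
      rw [add_sub_cancel_left, abs_mul, abs_of_nonneg (by positivity : (0:ℝ) ≤ h ^ 2)]
    rw [habs]
    have hh2 : (0:ℝ) ≤ h ^ 2 := by positivity
    calc h ^ 2 * |∑ k ∈ Finset.range (n + 1),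
          (n.choose k : ℝ) * (-1) ^ k * (((n : ℝ) - 2 * k) / 2) ^ (n + 2) * I k|
        ≤ h ^ 2 * (2 ^ n * (((n : ℝ) + 1) ^ (n + 2) * M)) :=
          mul_le_mul_of_nonneg_left hS hh2
      _ ≤ (2 ^ n * ((n : ℝ) + 1) ^ (n + 2) + 1) * h ^ 2 * M := by
          nlinarith [mul_nonneg hh2 hM0]
end

section
/- Existence of a weight function for Carleman estimates: let G = (0,1) and let G₂ be a nonempty open subinterval with closure contained in G. Then there exists an open interval G̃ ⊃ [0,1] and a smooth function ψ on the closure of G̃ such that 0 < ψ ≤ 1 on G̃, |ψ'(x)| ≥ C₀ > 0 for all x in the closure of G \ G₂ for some constant C₀, ψ'(0) > 0 and ψ'(1) < 0. -/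
/-- Existence of a weight function for Carleman estimates: for `G = (0,1)` and
`G₂ = (a,b)` with closure contained in `G`, there is an open interval
`G̃ = (-ε, 1+ε) ⊃ [0,1]` and a `C^k` function `ψ` (for any prescribed `k`) with
`0 < ψ ≤ 1` on `G̃`, `|ψ'| ≥ C₀ > 0` on the closure of `G \ G₂`, `ψ'(0) > 0`
and `ψ'(1) < 0`. -/
theorem exists_carleman_weight (k : ℕ) (a b : ℝ) (ha : 0 < a) (hab : a < b) (hb : b < 1) :
    ∃ (ε : ℝ) (ψ : ℝ → ℝ), 0 < ε ∧ ContDiff ℝ k ψ ∧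
      (∀ x ∈ Set.Ioo (-ε) (1 + ε), 0 < ψ x ∧ ψ x ≤ 1) ∧
      (∃ C₀ > 0, ∀ x ∈ Set.Icc (0:ℝ) 1 \ Set.Ioo a b, C₀ ≤ |deriv ψ x|) ∧
      0 < deriv ψ 0 ∧ deriv ψ 1 < 0 := by
  set m : ℝ := (a + b) / 2 with hm
  have hm0 : 0 < m := by simp only [hm]; linarith
  have hm1 : m < 1 := by simp only [hm]; linarith
  refine ⟨1, fun x => 1 - (x - m) ^ 2 / 8, one_pos, ?_, ?_, ?_, ?_, ?_⟩
  · exact ContDiff.sub contDiff_const (((contDiff_id.sub contDiff_const).pow 2).div_const 8)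
  · intro x hx
    obtain ⟨hx1, hx2⟩ := hx
    have h1 : (x - m) ^ 2 < 4 := by nlinarith
    constructor
    · nlinarith
    · nlinarith [sq_nonneg (x - m)]
  all_goals
    have hd : ∀ x : ℝ, deriv (fun x => 1 - (x - m) ^ 2 / 8) x = -(x - m) / 4 := by
      intro x
      have h1 : HasDerivAt (fun x : ℝ => x - m) 1 x := (hasDerivAt_id x).sub_const m
      have h2 := (h1.pow 2).div_const 8
      have h3 := (hasDerivAt_const x (1:ℝ)).sub h2
      rw [show (fun x : ℝ => 1 - (x - m) ^ 2 / 8) = ((fun x => (1:ℝ)) - fun x => ((fun x => x - m) ^ 2) x / 8) from rfl, h3.deriv]; norm_num; ring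
  · refine ⟨(b - a) / 8, by linarith, ?_⟩
    intro x hx
    obtain ⟨⟨hx0, hx1⟩, hxnot⟩ := hx
    rw [hd]
    have : |x - m| ≥ (b - a) / 2 := by
      rcases not_and_or.mp hxnot with h | h
      · push_neg at h
        rw [abs_sub_comm, abs_of_nonneg (by simp only [hm]; linarith)]
        simp only [hm]; linarith
      · push_neg at h
        rw [abs_of_nonneg (by simp only [hm]; linarith)]
        simp only [hm]; linarith
    rw [abs_div, abs_neg]
    rw [abs_of_pos (by norm_num : (0:ℝ) < 4)]
    linarith
  · rw [hd]; linarith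
  · rw [hd]; linarith
end

section
/- Lower bound on the derivative of the time-weight term at t = 0: with φ(x) = e^{μ(ψ(x)+6m)} − μe^{6μ(m+1)}, σ = λμ²e^{μ(6m−4)}, θ_t(0) = −4σ/T, and 0 < ψ(x) ≤ 1, it holds that λφ(x)θ_t(0) = (4/T)λ²μ²e^{μ(6m−4)}(μe^{6μ(m+1)} − e^{μ(ψ(x)+6m)}) ≥ c λ²μ³ e^{2μ(6m+1)} for all μ > 1 and all λ ≥ 1, where c > 0 is a constant independent of T, λ, μ (one may take any T with 0 < T < 1). -/
open Real

/-- Lower bound on the derivative of the time-weight term at `t = 0`: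
with `φ(x) = e^{μ(ψ(x)+6m)} − μ e^{6μ(m+1)}`, `σ = λ μ² e^{μ(6m−4)}` and
`θ_t(0) = −4σ/T`, one has
`λ φ(x) θ_t(0) = (4/T) λ² μ² e^{μ(6m−4)} (μ e^{6μ(m+1)} − e^{μ(ψ(x)+6m)})
  ≥ c λ² μ³ e^{2μ(6m+1)}` for a constant `c > 0` independent of `T, λ, μ`. -/
theorem time_weight_derivative_lower_bound :
    ∃ c > 0, ∀ (m : ℕ) (T lam μ ψx : ℝ), 1 ≤ m → 0 < T → T < 1 → 1 ≤ lam → 1 < μ →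
      0 < ψx → ψx ≤ 1 →
      lam * (exp (μ * (ψx + 6 * m)) - μ * exp (6 * μ * (m + 1)))
          * (-(4 * (lam * μ ^ 2 * exp (μ * (6 * m - 4)))) / T)
        = 4 / T * lam ^ 2 * μ ^ 2 * exp (μ * (6 * m - 4))
            * (μ * exp (6 * μ * (m + 1)) - exp (μ * (ψx + 6 * m))) ∧
      c * lam ^ 2 * μ ^ 3 * exp (2 * μ * (6 * m + 1))
        ≤ 4 / T * lam ^ 2 * μ ^ 2 * exp (μ * (6 * m - 4))
            * (μ * exp (6 * μ * (m + 1)) - exp (μ * (ψx + 6 * m))) := by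
  refine ⟨1, one_pos, fun m T lam μ ψx hm hT hT1 hlam hμ hψ hψ1 => ?_⟩
  have hT0 : T ≠ 0 := ne_of_gt hT
  have hμ0 : (0:ℝ) < μ := lt_trans one_pos hμ
  constructor
  · field_simp
    ring
  · have h1 : exp (μ * (ψx + 6 * m)) ≤ exp (μ * (1 + 6 * m)) := by
      apply exp_le_exp.mpr
      nlinarith
    have h2 : exp (μ * (1 + 6 * m)) ≤ 1 / 2 * (μ * exp (6 * μ * (m + 1))) := by
      rw [show (6:ℝ) * μ * (m + 1) = μ * (1 + 6 * m) + 5 * μ by ring, exp_add]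
      have h3 : (2:ℝ) ≤ exp (5 * μ) := by
        have := add_one_le_exp (5 * μ)
        linarith
      have h4 : (1:ℝ) ≤ 1 / 2 * (μ * exp (5 * μ)) := by nlinarith
      nlinarith [mul_le_mul_of_nonneg_left h4 (le_of_lt (exp_pos (μ * (1 + 6 * m))))]
    have hdiff : 1 / 2 * (μ * exp (6 * μ * (m + 1)))
        ≤ μ * exp (6 * μ * (m + 1)) - exp (μ * (ψx + 6 * m)) := by linarith
    have hE : exp (2 * μ * (6 * m + 1))
        = exp (μ * (6 * m - 4)) * exp (6 * μ * (m + 1)) := by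
      rw [← exp_add]; ring_nf
    have h4T : (4:ℝ) ≤ 4 / T := by
      rw [le_div_iff₀ hT]; nlinarith
    have hlam0 : (0:ℝ) < lam := lt_of_lt_of_le one_pos hlam
    have hE1 := exp_pos (μ * (6 * m - 4))
    have hE2 := exp_pos (6 * μ * (m + 1))
    calc 1 * lam ^ 2 * μ ^ 3 * exp (2 * μ * (6 * m + 1))
        ≤ 4 * lam ^ 2 * μ ^ 2 * exp (μ * (6 * m - 4))
            * (1 / 2 * (μ * exp (6 * μ * (m + 1)))) := by
          rw [hE]; nlinarith [mul_pos (mul_pos (mul_pos (pow_pos hlam0 2) (pow_pos hμ0 3)) hE1) hE2]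
      _ ≤ 4 / T * lam ^ 2 * μ ^ 2 * exp (μ * (6 * m - 4))
            * (1 / 2 * (μ * exp (6 * μ * (m + 1)))) := by
          apply mul_le_mul_of_nonneg_right _ (by positivity)
          apply mul_le_mul_of_nonneg_right _ (le_of_lt hE1)
          apply mul_le_mul_of_nonneg_right _ (by positivity)
          apply mul_le_mul_of_nonneg_right h4T (by positivity)
      _ ≤ 4 / T * lam ^ 2 * μ ^ 2 * exp (μ * (6 * m - 4))
            * (μ * exp (6 * μ * (m + 1)) - exp (μ * (ψx + 6 * m))) := by
          apply mul_le_mul_of_nonneg_left hdiff (by positivity)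
end
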